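/- arXiv:1006.3779 — 7 statements merged into one kernel-verified Lean document; each statement's English description precedes it below -/
import Mathlib

section
/- Let G be a graph with minimum degree at least 1 and let D be an identifying code of G. If v ∈ D is a vertex whose component in the induced subgraph G[D] consists of exactly two vertices (a 2-cluster), then a contradiction follows; equivalently, the induced subgraph G[D] has no connected component with exactly two vertices, provided every vertex of G has degree exactly 3 (G is 3-regular) and G is triangle-free. -/
/-- The closed neighborhood `N[v]`. -/
def closedNbhd {V : Type*} (G : SimpleGraph V) (v : V) : Set V :=
  insert v (G.neighborSet v)

/-- `D` is an identifying code: closed-neighborhood traces on `D` are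
nonempty and pairwise distinct. -/
def IsIDCode {V : Type*} (G : SimpleGraph V) (D : Set V) : Prop :=
  (∀ x, (closedNbhd G x ∩ D).Nonempty) ∧
    ∀ x y : V, x ≠ y → closedNbhd G x ∩ D ≠ closedNbhd G y ∩ D

/-- `C` is a cluster: a connected component of the subgraph induced by `D`. -/
def IsCluster {V : Type*} (G : SimpleGraph V) (D C : Set V) : Prop :=
  C.Nonempty ∧ C ⊆ D ∧ (G.induce C).Connected ∧
    ∀ u ∈ C, ∀ v ∈ D, G.Adj u v → v ∈ C

/-- In a 3-regular triangle-free graph, the induced subgraph on an identifying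
code has no connected component with exactly two vertices (no 2-clusters). -/
theorem no_two_cluster {V : Type*} (G : SimpleGraph V)
    (hreg : ∀ v : V, (G.neighborSet v).ncard = 3) (htf : G.CliqueFree 3)
    (D : Set V) (hD : IsIDCode G D) :
    ¬ ∃ C : Set V, IsCluster G D C ∧ C.ncard = 2 := by
  rintro ⟨C, ⟨hCne, hCD, hconn, hclosed⟩, hcard⟩
  obtain ⟨u, v, huv, rfl⟩ := Set.ncard_eq_two.mp hcard
  have hu : u ∈ ({u, v} : Set V) := by simp
  have hv : v ∈ ({u, v} : Set V) := by simp
  -- u and v are adjacent since the induced subgraph is connected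
  have hadj : G.Adj u v := by
    obtain ⟨p⟩ := hconn.preconnected ⟨u, hu⟩ ⟨v, hv⟩
    cases p with
    | nil => exact absurd rfl huv
    | @cons _ b _ h _ =>
      have hG : G.Adj u (b : V) := h
      rcases b.2 with hb | hb
      · exact absurd (hb ▸ hG) (G.irrefl)
      · exact hb ▸ hG
  have trace : ∀ w ∈ ({u, v} : Set V), closedNbhd G w ∩ D = {u, v} := by
    intro w hw
    ext x
    constructor
    · rintro ⟨hx, hxD⟩
      rcases hx with rfl | hx
      · exact hw
      · exact hclosed w hw x hxD hx
    · rintro (rfl | rfl)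
      · rcases hw with rfl | rfl
        · exact ⟨Or.inl rfl, hCD hu⟩
        · exact ⟨Or.inr hadj.symm, hCD hu⟩
      · rcases hw with rfl | rfl
        · exact ⟨Or.inr hadj, hCD hv⟩
        · exact ⟨Or.inl rfl, hCD hv⟩
  exact hD.2 u v huv ((trace u hu).trans (trace v hv).symm)
end

section
/- Let G be a finite k-regular graph and D an identifying code for G. Then |D| ≥ |V(G)| / (1 + k/2); equivalently, (2 + k)·|D| ≥ 2·|V(G)|. -/
/-- For a finite `k`-regular graph, any identifying code `D` satisfies
`|D| ≥ |V| / (1 + k/2)`, i.e. `(2 + k)·|D| ≥ 2·|V|`. -/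
theorem id_code_density_regular {V : Type*} [Fintype V] [DecidableEq V]
    (G : SimpleGraph V) [DecidableRel G.Adj] (k : ℕ)
    (hreg : G.IsRegularOfDegree k) (D : Set V) (hD : IsIDCode G D) :
    2 * Fintype.card V ≤ (2 + k) * D.ncard := by
  classical
  set Df := (Set.toFinite D).toFinset with hDf
  set I : V → Finset V := fun x => Df.filter (· ∈ closedNbhd G x) with hI
  have hIcoe : ∀ x, (I x : Set V) = closedNbhd G x ∩ D := by
    intro x
    ext d
    simp only [hI, Finset.coe_filter, Set.Finite.mem_toFinset, Set.mem_setOf_eq,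
      Set.mem_inter_iff, Df]
    tauto
  have hne : ∀ x, (I x).Nonempty := by
    intro x
    obtain ⟨d, hd⟩ := hD.1 x
    refine ⟨d, ?_⟩
    simp only [hI, Finset.mem_filter, Set.Finite.mem_toFinset, Df]
    exact ⟨hd.2, hd.1⟩
  have hinj : ∀ x y, I x = I y → x = y := by
    intro x y h
    by_contra hxy
    apply hD.2 x y hxy
    rw [← hIcoe, ← hIcoe, h]
  -- double counting: total identifier size
  have hsum : ∑ x : V, (I x).card = Df.card * (k + 1) := by
    have h1 : ∀ x, (I x).card = ∑ d ∈ Df, if d ∈ closedNbhd G x then 1 else 0 := by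
      intro x; exact Finset.card_filter _ _
    calc ∑ x : V, (I x).card
        = ∑ x : V, ∑ d ∈ Df, if d ∈ closedNbhd G x then 1 else 0 :=
          Finset.sum_congr rfl fun x _ => h1 x
      _ = ∑ d ∈ Df, ∑ x : V, if d ∈ closedNbhd G x then 1 else 0 := Finset.sum_comm
      _ = ∑ d ∈ Df, (k + 1) := by
          refine Finset.sum_congr rfl fun d _ => ?_
          have hfe : (Finset.univ.filter (fun x => d ∈ closedNbhd G x)) =
              insert d (G.neighborFinset d) := by
            ext x
            simp only [Finset.mem_filter, Finset.mem_univ, true_and, Finset.mem_insert,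
              SimpleGraph.mem_neighborFinset, closedNbhd, Set.mem_insert_iff,
              SimpleGraph.mem_neighborSet]
            constructor
            · rintro (h | h)
              · exact Or.inl h.symm
              · exact Or.inr h.symm
            · rintro (h | h)
              · exact Or.inl h.symm
              · exact Or.inr h.symm
          rw [← Finset.card_filter, hfe,
            Finset.card_insert_of_notMem (by simp), SimpleGraph.card_neighborFinset_eq_degree,
            hreg d]
      _ = Df.card * (k + 1) := by rw [Finset.sum_const, smul_eq_mul]
  -- vertices with singleton identifier inject into D
  set S := Finset.univ.filter (fun x => (I x).card = 1) with hS
  have singleton_eq : ∀ x, (I x).card = 1 → I x = {(hne x).choose} := by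
    intro x h
    have hm := (hne x).choose_spec
    have huniq := Finset.card_le_one.mp h.le
    exact Finset.eq_singleton_iff_unique_mem.mpr ⟨hm, fun b hb => huniq b hb _ hm⟩
  have hScard : S.card ≤ Df.card := by
    refine Finset.card_le_card_of_injOn (fun x => (hne x).choose) ?_ ?_
    · intro x _
      exact Finset.mem_of_mem_filter _ (hne x).choose_spec
    · intro x hx y hy hxy
      rw [Finset.mem_coe, hS, Finset.mem_filter] at hx hy
      have hxy' : (hne x).choose = (hne y).choose := hxy
      exact hinj x y (by rw [singleton_eq x hx.2, singleton_eq y hy.2, hxy'])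
  -- pointwise bound
  have hkey : ∀ x : V, 2 ≤ (I x).card + (if (I x).card = 1 then 1 else 0) := by
    intro x
    have h1 : 1 ≤ (I x).card := Finset.card_pos.mpr (hne x)
    by_cases h : (I x).card = 1 <;> simp [h] <;> omega
  have hmain : 2 * Fintype.card V ≤ ∑ x : V, (I x).card + S.card := by
    have : S.card = ∑ x : V, (if (I x).card = 1 then 1 else 0) := by
      rw [hS, Finset.card_filter]
    rw [this, ← Finset.sum_add_distrib]
    calc 2 * Fintype.card V = ∑ _x : V, 2 := by
          rw [Finset.sum_const, smul_eq_mul, Finset.card_univ, mul_comm]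
      _ ≤ _ := Finset.sum_le_sum fun x _ => hkey x
  have hncard : D.ncard = Df.card := Set.ncard_eq_toFinset_card D (Set.toFinite D)
  rw [hncard]
  calc 2 * Fintype.card V ≤ ∑ x : V, (I x).card + S.card := hmain
    _ ≤ Df.card * (k + 1) + Df.card := by rw [hsum]; omega
    _ = (2 + k) * Df.card := by ring
end

section
/- Let G be a finite 3-regular graph and D an identifying code for G. Then 5·|D| ≥ 2·|V(G)|, i.e., the density of D is at least 2/5. -/
/-- For a finite 3-regular graph, any identifying code `D` satisfies
`5·|D| ≥ 2·|V|`, i.e. `D` has density at least `2/5`. -/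
theorem id_code_density_cubic {V : Type*} [Fintype V] [DecidableEq V]
    (G : SimpleGraph V) [DecidableRel G.Adj]
    (hreg : G.IsRegularOfDegree 3) (D : Set V) (hD : IsIDCode G D) :
    2 * Fintype.card V ≤ 5 * D.ncard := by
  classical
  set Dfin := D.toFinset with hDfin
  have hDcard : D.ncard = Dfin.card := Set.ncard_eq_toFinset_card' D
  set T : V → Finset V := fun x => (insert x (G.neighborFinset x)) ∩ Dfin with hT
  have hTmem : ∀ x c, c ∈ T x ↔ c ∈ closedNbhd G x ∩ D := by
    intro x c
    simp [hT, closedNbhd, hDfin, Set.mem_toFinset]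
  have hTcoe : ∀ x, (T x : Set V) = closedNbhd G x ∩ D := by
    intro x; ext c; simp [hTmem]
  -- Traces are nonempty
  have hTne : ∀ x, 1 ≤ (T x).card := by
    intro x
    rw [Finset.one_le_card]
    obtain ⟨c, hc⟩ := hD.1 x
    exact ⟨c, (hTmem x c).2 hc⟩
  -- T is injective
  have hTinj : Function.Injective T := by
    intro x y hxy
    by_contra hne
    exact hD.2 x y hne (by rw [← hTcoe, ← hTcoe, hxy])
  -- The set of vertices with trace of size 1
  set A : Finset V := Finset.univ.filter (fun x => (T x).card = 1) with hA
  have hAcard : A.card ≤ Dfin.card := by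
    have hsub : A.image T ⊆ Dfin.image (fun c => ({c} : Finset V)) := by
      intro s hs
      simp only [Finset.mem_image] at hs ⊢
      obtain ⟨x, hx, rfl⟩ := hs
      simp only [hA, Finset.mem_filter] at hx
      obtain ⟨c, hc⟩ := Finset.card_eq_one.1 hx.2
      refine ⟨c, ?_, hc.symm⟩
      have : c ∈ T x := hc ▸ Finset.mem_singleton_self c
      exact Finset.mem_of_mem_inter_right this
    calc A.card = (A.image T).card :=
          (Finset.card_image_of_injective A hTinj).symm
      _ ≤ (Dfin.image (fun c => ({c} : Finset V))).card := Finset.card_le_card hsub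
      _ ≤ Dfin.card := Finset.card_image_le
  -- Double counting: total trace size
  have hswap : ∑ x : V, (T x).card
      = ∑ c : V, (Finset.univ.filter (fun x => c ∈ T x)).card := by
    simp_rw [Finset.card_filter]
    rw [Finset.sum_comm]
    congr 1
    ext x
    rw [Finset.sum_ite_mem, Finset.univ_inter, Finset.card_eq_sum_ones]
  -- Upper bound for each codeword fiber
  have hfiber : ∀ c : V, (Finset.univ.filter (fun x => c ∈ T x)).card
      ≤ if c ∈ Dfin then 4 else 0 := by
    intro c
    by_cases hc : c ∈ Dfin
    · simp only [hc, if_true]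
      have hsub : Finset.univ.filter (fun x => c ∈ T x)
          ⊆ insert c (G.neighborFinset c) := by
        intro x hx
        simp only [Finset.mem_filter] at hx
        have := (hTmem x c).1 hx.2
        rcases this.1 with h | h
        · exact h ▸ Finset.mem_insert_self c _
        · exact Finset.mem_insert_of_mem
            ((SimpleGraph.mem_neighborFinset G c x).2
              (((SimpleGraph.mem_neighborSet G x c).1 h).symm))
      calc (Finset.univ.filter (fun x => c ∈ T x)).card
          ≤ (insert c (G.neighborFinset c)).card := Finset.card_le_card hsub
        _ ≤ (G.neighborFinset c).card + 1 := Finset.card_insert_le _ _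
        _ = 4 := by rw [G.card_neighborFinset_eq_degree, hreg c]
    · simp only [hc, if_false, Nat.le_zero, Finset.card_eq_zero,
        Finset.filter_eq_empty_iff]
      intro x _ hmem
      exact hc (Finset.mem_of_mem_inter_right hmem)
  have hupper : ∑ x : V, (T x).card ≤ 4 * Dfin.card := by
    rw [hswap]
    calc ∑ c : V, (Finset.univ.filter (fun x => c ∈ T x)).card
        ≤ ∑ c : V, (if c ∈ Dfin then 4 else 0) := Finset.sum_le_sum (fun c _ => hfiber c)
      _ = ∑ c ∈ Dfin, 4 := by rw [Finset.sum_ite_mem, Finset.univ_inter]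
      _ = 4 * Dfin.card := by rw [Finset.sum_const, smul_eq_mul, mul_comm]
  -- Lower bound
  have hlower : 2 * Fintype.card V ≤ (∑ x : V, (T x).card) + A.card := by
    have hpt : ∀ x : V, 2 ≤ (T x).card + (if x ∈ A then 1 else 0) := by
      intro x
      by_cases hx : x ∈ A
      · rw [if_pos hx]
        have hx' : (T x).card = 1 := by
          simp only [hA, Finset.mem_filter] at hx
          exact hx.2
        omega
      · have h1 : (T x).card ≠ 1 := by
          intro h
          exact hx (by simp [hA, h])
        have := hTne x
        omega
    calc 2 * Fintype.card V = ∑ _x : V, 2 := by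
          rw [Finset.sum_const, smul_eq_mul, Finset.card_univ, mul_comm]
      _ ≤ ∑ x : V, ((T x).card + (if x ∈ A then 1 else 0)) :=
          Finset.sum_le_sum (fun x _ => hpt x)
      _ = (∑ x : V, (T x).card) + ∑ x : V, (if x ∈ A then 1 else 0) :=
          Finset.sum_add_distrib
      _ = (∑ x : V, (T x).card) + A.card := by
          congr 1
          rw [Finset.sum_ite_mem, Finset.univ_inter, Finset.card_eq_sum_ones]
  rw [hDcard]
  omega
end

section
/- Let D be an identifying code for the infinite hexagonal grid H and let C be a 3-cluster of D with center w and leaves u, v. Then for each leaf v of C there exists a vertex of D at distance exactly two from v that does not belong to C. -/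
/-- The infinite hexagonal grid on `ℤ × ℤ` ("brick wall" representation):
horizontal edges between `(x, y)` and `(x+1, y)`, and vertical edges between
`(x, y)` and `(x, y+1)` when `x + y` is even. -/
def hexGrid : SimpleGraph (ℤ × ℤ) where
  Adj a b := (a.2 = b.2 ∧ (a.1 = b.1 + 1 ∨ b.1 = a.1 + 1)) ∨
    (a.1 = b.1 ∧ Even (a.1 + min a.2 b.2) ∧ (b.2 = a.2 + 1 ∨ a.2 = b.2 + 1))
  symm := by
    constructor
    rintro a b (⟨h1, h2⟩ | ⟨h1, h2, h3⟩)
    · exact Or.inl ⟨h1.symm, h2.symm⟩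
    · exact Or.inr ⟨h1.symm, by rwa [← h1, min_comm], h3.symm⟩
  loopless := by
    constructor
    rintro a (⟨h1, h2⟩ | ⟨h1, h2, h3⟩) <;> omega

/-- `v` is a 1-cluster of `D`: it is in `D` and none of its neighbors is. -/
def IsOneCluster {V : Type*} (G : SimpleGraph V) (D : Set V) (v : V) : Prop :=
  v ∈ D ∧ ∀ u, G.Adj v u → u ∉ D

/-- A 1-cluster `v` is crowded if some neighbor `u ∉ D` of `v` has all of its
neighbors in `D`. -/
def IsCrowdedOne {V : Type*} (G : SimpleGraph V) (D : Set V) (v : V) : Prop :=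
  ∃ u, G.Adj v u ∧ u ∉ D ∧ ∀ z, G.Adj u z → z ∈ D

/-- A 3-cluster: a cluster with exactly three vertices. -/
def IsThreeCluster {V : Type*} (G : SimpleGraph V) (D C : Set V) : Prop :=
  IsCluster G D C ∧ C.ncard = 3

/-- `w` is the center of the 3-cluster `C`: it is adjacent to both other
vertices of `C`. -/
def IsCenter {V : Type*} (G : SimpleGraph V) (C : Set V) (w : V) : Prop :=
  w ∈ C ∧ ∀ u ∈ C, u ≠ w → G.Adj w u

/-- An open 3-cluster: the neighbor of the center outside the cluster has no
other neighbor in `D`. -/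
def IsOpenThree {V : Type*} (G : SimpleGraph V) (D C : Set V) : Prop :=
  IsThreeCluster G D C ∧ ∀ w u, IsCenter G C w → G.Adj w u → u ∉ C →
    ∀ z, G.Adj u z → z ≠ w → z ∉ D

/-- A closed 3-cluster: a 3-cluster that is not open. -/
def IsClosedThree {V : Type*} (G : SimpleGraph V) (D C : Set V) : Prop :=
  IsThreeCluster G D C ∧ ¬ IsOpenThree G D C

lemma hex_adj_iff {v z : ℤ × ℤ} : hexGrid.Adj v z ↔
    ((v.2 = z.2 ∧ (v.1 = z.1 + 1 ∨ z.1 = v.1 + 1)) ∨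
    (v.1 = z.1 ∧ (v.1 + min v.2 z.2) % 2 = 0 ∧ (z.2 = v.2 + 1 ∨ v.2 = z.2 + 1))) := by
  simp [hexGrid, Int.even_iff]

lemma hex_no_tri {p q r : ℤ × ℤ} (h1 : hexGrid.Adj p q) (h2 : hexGrid.Adj q r)
    (h3 : hexGrid.Adj r p) : False := by
  rw [hex_adj_iff] at h1 h2 h3
  omega

lemma hex_no_c4 {p q r s : ℤ × ℤ} (h1 : hexGrid.Adj p q) (h2 : hexGrid.Adj q r)
    (h3 : hexGrid.Adj r s) (h4 : hexGrid.Adj s p) : p = r ∨ q = s := by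
  rw [hex_adj_iff] at h1 h2 h3 h4
  rcases p with ⟨a,b⟩; rcases q with ⟨c,d⟩; rcases r with ⟨e,f⟩; rcases s with ⟨g,h⟩
  simp only [Prod.mk.injEq] at *
  omega

lemma hex_nbr_cases {v z : ℤ × ℤ} (h : hexGrid.Adj v z) :
    z = (v.1 - 1, v.2) ∨ z = (v.1 + 1, v.2) ∨ z = (v.1, v.2 + 1) ∨ z = (v.1, v.2 - 1) := by
  rw [hex_adj_iff] at h
  rcases v with ⟨a,b⟩; rcases z with ⟨c,d⟩
  simp only [Prod.mk.injEq] at *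
  omega

lemma hex_adj_left (v : ℤ × ℤ) : hexGrid.Adj v (v.1 - 1, v.2) := by
  rw [hex_adj_iff]; left; exact ⟨rfl, by omega⟩

lemma hex_adj_right (v : ℤ × ℤ) : hexGrid.Adj v (v.1 + 1, v.2) := by
  rw [hex_adj_iff]; left; exact ⟨rfl, by omega⟩

/-- the vertical neighbor -/
def hvert (v : ℤ × ℤ) : ℤ × ℤ := (v.1, if (v.1 + v.2) % 2 = 0 then v.2 + 1 else v.2 - 1)

lemma hex_adj_vert (v : ℤ × ℤ) : hexGrid.Adj v (hvert v) := by
  rw [hex_adj_iff]; right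
  unfold hvert
  by_cases h : (v.1 + v.2) % 2 = 0 <;> simp [h] <;> omega

lemma hvert_fst (v : ℤ × ℤ) : (hvert v).1 = v.1 := rfl

lemma hex_dist_two {v a z : ℤ × ℤ} (h1 : hexGrid.Adj v a) (h2 : hexGrid.Adj a z)
    (hne : v ≠ z) (hnadj : ¬ hexGrid.Adj v z) : hexGrid.dist v z = 2 := by
  have hle : hexGrid.dist v z ≤ 2 := by
    have := hexGrid.dist_le (SimpleGraph.Walk.cons h1 (SimpleGraph.Walk.cons h2 SimpleGraph.Walk.nil))
    simpa using this
  have hr : hexGrid.Reachable v z :=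
    ⟨SimpleGraph.Walk.cons h1 (SimpleGraph.Walk.cons h2 SimpleGraph.Walk.nil)⟩
  have h0 : hexGrid.dist v z ≠ 0 := fun h => hne (hr.dist_eq_zero_iff.mp h)
  have h1' : hexGrid.dist v z ≠ 1 := fun h => hnadj (SimpleGraph.dist_eq_one_iff_adj.mp h)
  omega

lemma path_struct {C : Set (ℤ × ℤ)} {v p q : ℤ × ℤ}
    (hconn : (hexGrid.induce C).Connected)
    (hCeq : C = {v, p, q}) (hvq : v ≠ q) (hpq : p ≠ q)
    (hnadj : ¬ hexGrid.Adj v q) :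
    hexGrid.Adj v p ∧ hexGrid.Adj p q := by
  have hvC : v ∈ C := by rw [hCeq]; simp
  have hqC : q ∈ C := by rw [hCeq]; simp
  have main : ∀ (s t : C) (wk : (hexGrid.induce C).Walk s t), (t : ℤ × ℤ) = q →
      (((s : ℤ × ℤ) = v → hexGrid.Adj v p ∧ hexGrid.Adj p q) ∧
       ((s : ℤ × ℤ) = p → hexGrid.Adj p q)) := by
    intro s t wk
    induction wk with
    | nil =>
      intro ht
      exact ⟨fun hs => absurd (hs ▸ ht) hvq, fun hs => absurd (hs ▸ ht) hpq⟩
    | @cons s m t h rest ih =>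
      intro ht
      obtain ⟨ih1, ih2⟩ := ih ht
      have hadj : hexGrid.Adj (s : ℤ × ℤ) (m : ℤ × ℤ) := h
      have hmC : (m : ℤ × ℤ) ∈ ({v, p, q} : Set (ℤ × ℤ)) := by
        rw [← hCeq]; exact m.2
      simp only [Set.mem_insert_iff, Set.mem_singleton_iff] at hmC
      constructor
      · intro hs
        rw [hs] at hadj
        rcases hmC with hm | hm | hm
        · exact absurd (by rwa [hm] at hadj) hexGrid.irrefl
        · have h1 : hexGrid.Adj v p := by rwa [hm] at hadj
          exact ⟨h1, ih2 hm⟩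
        · exact absurd (by rwa [hm] at hadj) hnadj
      · intro hs
        rw [hs] at hadj
        rcases hmC with hm | hm | hm
        · exact (ih1 hm).2
        · exact absurd (by rwa [hm] at hadj) hexGrid.irrefl
        · rwa [hm] at hadj
  obtain ⟨wk⟩ := hconn.preconnected ⟨v, hvC⟩ ⟨q, hqC⟩
  exact (main _ _ wk rfl).1 rfl


lemma key {D C : Set (ℤ × ℤ)} (hD : IsIDCode hexGrid D) {v w u : ℤ × ℤ}
    (hCeq : C = {v, w, u}) (hvw : hexGrid.Adj v w) (hwu : hexGrid.Adj w u)
    (hvu : ¬ hexGrid.Adj v u) (hvune : v ≠ u)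
    (hsub : C ⊆ D) (hclosed : ∀ x ∈ C, ∀ y ∈ D, hexGrid.Adj x y → y ∈ C) :
    ∃ z ∈ D, z ∉ C ∧ hexGrid.dist v z = 2 := by
  by_contra hcon
  push_neg at hcon
  have hvC : v ∈ C := by rw [hCeq]; simp
  have hvD : v ∈ D := hsub hvC
  have trace : ∀ a, hexGrid.Adj v a → a ≠ w → closedNbhd hexGrid a ∩ D = {v} := by
    intro a hva haw
    have haC : a ∉ C := by
      rw [hCeq]
      simp only [Set.mem_insert_iff, Set.mem_singleton_iff]
      push_neg
      exact ⟨hva.ne', haw, fun h => hvu (h ▸ hva)⟩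
    have haD : a ∉ D := fun haD => haC (hclosed v hvC a haD hva)
    ext z
    simp only [closedNbhd, Set.mem_inter_iff, Set.mem_insert_iff,
      SimpleGraph.mem_neighborSet, Set.mem_singleton_iff]
    constructor
    · rintro ⟨rfl | hadj, hzD⟩
      · exact absurd hzD haD
      · by_cases hzC : z ∈ C
        · rw [hCeq] at hzC
          simp only [Set.mem_insert_iff, Set.mem_singleton_iff] at hzC
          rcases hzC with rfl | rfl | rfl
          · rfl
          · exact (hex_no_tri hva hadj hvw.symm).elim
          · rcases hex_no_c4 hva hadj hwu.symm hvw.symm with h | h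
            · exact absurd h hvune
            · exact absurd h haw
        · have hzv : z ≠ v := fun h => hzC (h ▸ hvC)
          have hnadj : ¬ hexGrid.Adj v z := fun h => hzC (hclosed v hvC z hzD h)
          exact absurd (hex_dist_two hva hadj (Ne.symm hzv) hnadj) (hcon z hzD hzC)
    · rintro rfl
      exact ⟨Or.inr hva.symm, hvD⟩
  rcases hex_nbr_cases hvw with hw | hw | hw | hw
  · refine hD.2 (v.1 + 1, v.2) (hvert v) ?_
      ((trace _ (hex_adj_right v) ?_).trans (trace _ (hex_adj_vert v) ?_).symm)
    · intro h; have := congrArg Prod.fst h; rw [hvert_fst] at this; simp at this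
    · rw [hw]; intro h; have := congrArg Prod.fst h; simp at this <;> omega
    · rw [hw]; intro h; have := congrArg Prod.fst h; rw [hvert_fst] at this; simp at this <;> omega
  · refine hD.2 (v.1 - 1, v.2) (hvert v) ?_
      ((trace _ (hex_adj_left v) ?_).trans (trace _ (hex_adj_vert v) ?_).symm)
    · intro h; have := congrArg Prod.fst h; rw [hvert_fst] at this; simp at this
    · rw [hw]; intro h; have := congrArg Prod.fst h; simp at this <;> omega
    · rw [hw]; intro h; have := congrArg Prod.fst h; rw [hvert_fst] at this; simp at this <;> omega
  · refine hD.2 (v.1 - 1, v.2) (v.1 + 1, v.2) ?_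
      ((trace _ (hex_adj_left v) ?_).trans (trace _ (hex_adj_right v) ?_).symm)
    · intro h; have := congrArg Prod.fst h; simp at this <;> omega
    · rw [hw]; intro h; have := congrArg Prod.fst h; simp at this <;> omega
    · rw [hw]; intro h; have := congrArg Prod.fst h; simp at this <;> omega
  · refine hD.2 (v.1 - 1, v.2) (v.1 + 1, v.2) ?_
      ((trace _ (hex_adj_left v) ?_).trans (trace _ (hex_adj_right v) ?_).symm)
    · intro h; have := congrArg Prod.fst h; simp at this <;> omega
    · rw [hw]; intro h; have := congrArg Prod.fst h; simp at this <;> omega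
    · rw [hw]; intro h; have := congrArg Prod.fst h; simp at this <;> omega

/-- For each leaf `v` of a 3-cluster `C` (a vertex of `C` that is not the
center), there exists a vertex of `D` at distance exactly two from `v` that is
not in `C`. -/
theorem leaf_has_distance_two_code_vertex (D : Set (ℤ × ℤ))
    (hD : IsIDCode hexGrid D) (C : Set (ℤ × ℤ)) (hC : IsThreeCluster hexGrid D C)
    (v : ℤ × ℤ) (hv : v ∈ C) (hleaf : ¬ IsCenter hexGrid C v) :
    ∃ w ∈ D, w ∉ C ∧ hexGrid.dist v w = 2 := by
  obtain ⟨⟨hne, hsub, hconn, hclosed⟩, hcard⟩ := hC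
  obtain ⟨a, b, c, hab, hac, hbc, hCeq⟩ := Set.ncard_eq_three.mp hcard
  have hv' : v = a ∨ v = b ∨ v = c := by
    have := hv; rw [hCeq] at this
    simpa using this
  obtain ⟨p, q, hvp, hvq, hpq, hCeq'⟩ :
      ∃ p q, v ≠ p ∧ v ≠ q ∧ p ≠ q ∧ C = {v, p, q} := by
    rcases hv' with rfl | rfl | rfl
    · exact ⟨b, c, hab, hac, hbc, hCeq⟩
    · exact ⟨a, c, fun h => hab h.symm, hbc, hac, by rw [hCeq]; ext x; simp; tauto⟩
    · exact ⟨a, b, fun h => hac h.symm, fun h => hbc h.symm, hab, by rw [hCeq]; ext x; simp; tauto⟩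
  rw [IsCenter] at hleaf
  push_neg at hleaf
  obtain ⟨t, htC, htv, htadj⟩ := hleaf hv
  have htC' : t = v ∨ t = p ∨ t = q := by
    have := htC; rw [hCeq'] at this; simpa using this
  rcases htC' with rfl | rfl | rfl
  · exact absurd rfl htv
  · have hCeq'' : C = {v, q, t} := by rw [hCeq']; ext x; simp; tauto
    obtain ⟨h1, h2⟩ := path_struct hconn hCeq'' hvp (Ne.symm hpq) htadj
    exact key hD hCeq'' h1 h2 htadj hvp hsub hclosed
  · obtain ⟨h1, h2⟩ := path_struct hconn hCeq' hvq hpq htadj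
    exact key hD hCeq' h1 h2 htadj hvq hsub hclosed
end

section
/- Let G be a finite 3-regular triangle-free graph with identifying code D. In the discharging where every v ∈ D gives charge 2/(5k) to each neighbor w ∉ D having k neighbors in D, every vertex of a cluster of G[D] of size at least 3 retains final charge at least 2/5. In particular, a vertex v of such a cluster C with exactly one neighbor in C gives away total charge at most 3/5. -/
/-- In the discharging where each `v ∈ D` gives `2/(5k)` to each neighbor
`w ∉ D` having `k` neighbors in `D`, every vertex of a `3⁺`-cluster retains
final charge at least `2/5`; in particular a vertex with exactly one neighbor
in its cluster gives away total charge at most `3/5`. -/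
theorem three_plus_cluster_vertex_charge {V : Type*} [Fintype V] [DecidableEq V]
    (G : SimpleGraph V) [DecidableRel G.Adj]
    (hreg : G.IsRegularOfDegree 3) (htf : G.CliqueFree 3)
    (D : Set V) [DecidablePred (· ∈ D)] (hD : IsIDCode G D)
    (C : Set V) [DecidablePred (· ∈ C)] (hC : IsCluster G D C)
    (hsize : 3 ≤ C.ncard) (v : V) (hv : v ∈ C) :
    (2 : ℝ) / 5 ≤ 1 - ∑ w ∈ (G.neighborFinset v).filter (fun w => w ∉ D),
        (2 : ℝ) / (5 * ((G.neighborFinset w).filter (fun z => z ∈ D)).card) ∧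
    (((G.neighborFinset v).filter (fun u => u ∈ C)).card = 1 →
      ∑ w ∈ (G.neighborFinset v).filter (fun w => w ∉ D),
          (2 : ℝ) / (5 * ((G.neighborFinset w).filter (fun z => z ∈ D)).card) ≤ 3 / 5) := by
  classical
  obtain ⟨hne, hsub, hconn, hclosed⟩ := hC
  -- v has a neighbor in C
  obtain ⟨u, huC, hune⟩ : ∃ u, u ∈ C ∧ u ≠ v :=
    Set.exists_ne_of_one_lt_ncard (by omega) v
  obtain ⟨p⟩ : ((G.induce C).Reachable ⟨v, hv⟩ ⟨u, huC⟩) :=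
    hconn.preconnected ⟨v, hv⟩ ⟨u, huC⟩
  have hnil : ¬ p.Nil := SimpleGraph.Walk.not_nil_of_ne (by
    intro h; exact hune (congrArg Subtype.val h).symm)
  have hadj : (G.induce C).Adj ⟨v, hv⟩ (p.getVert 1) := p.adj_snd hnil
  set u0 : V := (p.getVert 1).val with hu0
  have hu0C : u0 ∈ C := (p.getVert 1).property
  have hadj0 : G.Adj v u0 := hadj
  -- counting neighbors
  set A := (G.neighborFinset v).filter (fun w => w ∈ D) with hA
  set B := (G.neighborFinset v).filter (fun w => w ∉ D) with hB
  have hcardAB : A.card + B.card = 3 := by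
    rw [hA, hB, Finset.card_filter_add_card_filter_not]
    simpa [SimpleGraph.card_neighborFinset_eq_degree] using hreg v
  have hu0A : u0 ∈ A := by
    simp only [hA, Finset.mem_filter, SimpleGraph.mem_neighborFinset]
    exact ⟨hadj0, hsub hu0C⟩
  have hAcard : 1 ≤ A.card := Finset.card_pos.mpr ⟨u0, hu0A⟩
  have hBcard : B.card ≤ 2 := by omega
  -- each w ∈ B has at least one D-neighbor (namely v)
  have hkey : ∀ w ∈ B, v ∈ (G.neighborFinset w).filter (fun z => z ∈ D) := by
    intro w hw
    simp only [hB, Finset.mem_filter, SimpleGraph.mem_neighborFinset] at hw ⊢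
    exact ⟨hw.1.symm, hsub hv⟩
  have hk1 : ∀ w ∈ B, 1 ≤ ((G.neighborFinset w).filter (fun z => z ∈ D)).card := by
    intro w hw; exact Finset.card_pos.mpr ⟨v, hkey w hw⟩
  have hterm : ∀ w ∈ B,
      (2 : ℝ) / (5 * ((G.neighborFinset w).filter (fun z => z ∈ D)).card) ≤ 2 / 5 := by
    intro w hw
    have h1 : (1 : ℝ) ≤ ((G.neighborFinset w).filter (fun z => z ∈ D)).card := by
      exact_mod_cast hk1 w hw
    calc (2 : ℝ) / (5 * ((G.neighborFinset w).filter (fun z => z ∈ D)).card)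
        ≤ 2 / (5 * 1) := by gcongr
      _ = 2 / 5 := by norm_num
  have htermpos : ∀ w ∈ B,
      (0 : ℝ) ≤ (2 : ℝ) / (5 * ((G.neighborFinset w).filter (fun z => z ∈ D)).card) := by
    intro w hw; positivity
  -- main bound on the sum
  have hsum : ∑ w ∈ B,
      (2 : ℝ) / (5 * ((G.neighborFinset w).filter (fun z => z ∈ D)).card) ≤ 3 / 5 := by
    interval_cases hc : B.card
    · rw [Finset.card_eq_zero.mp hc]; norm_num
    · obtain ⟨w, hw⟩ := Finset.card_eq_one.mp hc
      rw [hw, Finset.sum_singleton]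
      have := hterm w (by rw [hw]; exact Finset.mem_singleton_self w)
      linarith
    · obtain ⟨w1, w2, hne12, hw⟩ := Finset.card_eq_two.mp hc
      have hw1 : w1 ∈ B := by rw [hw]; simp
      have hw2 : w2 ∈ B := by rw [hw]; simp
      -- at least one of w1, w2 has ≥ 2 neighbors in D
      have hbig : 2 ≤ ((G.neighborFinset w1).filter (fun z => z ∈ D)).card ∨
          2 ≤ ((G.neighborFinset w2).filter (fun z => z ∈ D)).card := by
        by_contra hcon
        push_neg at hcon
        have hf1 : (G.neighborFinset w1).filter (fun z => z ∈ D) = {v} := by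
          have := hk1 w1 hw1
          have hcard1 : ((G.neighborFinset w1).filter (fun z => z ∈ D)).card = 1 := by omega
          obtain ⟨x, hx⟩ := Finset.card_eq_one.mp hcard1
          rw [hx]
          have := hkey w1 hw1
          rw [hx, Finset.mem_singleton] at this
          rw [this]
        have hf2 : (G.neighborFinset w2).filter (fun z => z ∈ D) = {v} := by
          have := hk1 w2 hw2
          have hcard2 : ((G.neighborFinset w2).filter (fun z => z ∈ D)).card = 1 := by omega
          obtain ⟨x, hx⟩ := Finset.card_eq_one.mp hcard2
          rw [hx]
          have := hkey w2 hw2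
          rw [hx, Finset.mem_singleton] at this
          rw [this]
        -- traces are equal, contradicting the ID code
        have hwD : ∀ w ∈ B, w ∉ D := by
          intro w hw'; simp only [hB, Finset.mem_filter] at hw'; exact hw'.2
        have htrace : ∀ w : V, w ∉ D →
            closedNbhd G w ∩ D = ((G.neighborFinset w).filter (fun z => z ∈ D) : Finset V) := by
          intro w hwD'
          ext z
          simp only [closedNbhd, Set.mem_inter_iff, Set.mem_insert_iff,
            SimpleGraph.mem_neighborSet, Finset.coe_filter, Set.mem_setOf_eq,
            SimpleGraph.mem_neighborFinset]
          constructor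
          · rintro ⟨hz1 | hz1, hz2⟩
            · exact absurd (hz1 ▸ hz2) hwD'
            · exact ⟨hz1, hz2⟩
          · rintro ⟨hz1, hz2⟩; exact ⟨Or.inr hz1, hz2⟩
        have h1 := htrace w1 (hwD w1 hw1)
        have h2 := htrace w2 (hwD w2 hw2)
        rw [hf1] at h1
        rw [hf2] at h2
        exact hD.2 w1 w2 hne12 (h1.trans h2.symm)
      have hsum2 : ∑ w ∈ B,
          (2 : ℝ) / (5 * ((G.neighborFinset w).filter (fun z => z ∈ D)).card) =
          (2 : ℝ) / (5 * ((G.neighborFinset w1).filter (fun z => z ∈ D)).card) +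
          (2 : ℝ) / (5 * ((G.neighborFinset w2).filter (fun z => z ∈ D)).card) := by
        rw [hw, Finset.sum_pair hne12]
      have hsmall : ∀ w : V, 2 ≤ ((G.neighborFinset w).filter (fun z => z ∈ D)).card →
          (2 : ℝ) / (5 * ((G.neighborFinset w).filter (fun z => z ∈ D)).card) ≤ 1 / 5 := by
        intro w h2
        have h2' : (2 : ℝ) ≤ ((G.neighborFinset w).filter (fun z => z ∈ D)).card := by
          exact_mod_cast h2
        calc (2 : ℝ) / (5 * ((G.neighborFinset w).filter (fun z => z ∈ D)).card)
            ≤ 2 / (5 * 2) := by gcongr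
          _ = 1 / 5 := by norm_num
      rcases hbig with h | h
      · have := hsmall w1 h
        have := hterm w2 hw2
        rw [hsum2]; linarith
      · have := hsmall w2 h
        have := hterm w1 hw1
        rw [hsum2]; linarith
  exact ⟨by linarith, fun _ => hsum⟩
end

section
/- Let G be a finite 3-regular graph with identifying code D, and let v ∈ D be a 1-cluster (no neighbor of v lies in D). Under the discharging rule where v gives 2/(5k) to each neighbor w ∉ D with k = |N(w) ∩ D| neighbors in D, the vertex v retains charge at least 2/5; i.e., the total charge v gives away is at most 3/5. -/
/-- In a finite 3-regular graph with identifying code `D`, under the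
discharging rule where a 1-cluster `v ∈ D` gives `2/(5k)` to each neighbor
`w ∉ D` with `k = |N(w) ∩ D|`, the vertex `v` gives away total charge at most
`3/5`, hence retains charge at least `2/5`. -/
theorem one_cluster_retains_charge {V : Type*} [Fintype V] [DecidableEq V]
    (G : SimpleGraph V) [DecidableRel G.Adj] (hreg : G.IsRegularOfDegree 3)
    (D : Set V) [DecidablePred (· ∈ D)] (hD : IsIDCode G D)
    (v : V) (hv : v ∈ D) (hone : ∀ u, G.Adj v u → u ∉ D) :
    (∑ w ∈ (G.neighborFinset v).filter (fun w => w ∉ D),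
        (2 : ℝ) / (5 * ((G.neighborFinset w).filter (fun z => z ∈ D)).card) ≤ 3 / 5) ∧
    (2 : ℝ) / 5 ≤ 1 - ∑ w ∈ (G.neighborFinset v).filter (fun w => w ∉ D),
        (2 : ℝ) / (5 * ((G.neighborFinset w).filter (fun z => z ∈ D)).card) := by
  have hterm : ∀ w ∈ (G.neighborFinset v).filter (fun w => w ∉ D),
      (2 : ℝ) / (5 * ((G.neighborFinset w).filter (fun z => z ∈ D)).card) ≤ 1/5 := by
    intro w hw
    simp only [Finset.mem_filter, SimpleGraph.mem_neighborFinset] at hw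
    obtain ⟨hadj, hwD⟩ := hw
    set S := (G.neighborFinset w).filter (fun z => z ∈ D) with hS
    have hvS : v ∈ S := by
      simp [hS, SimpleGraph.mem_neighborFinset, hadj.symm, hv]
    have h2 : 2 ≤ S.card := by
      by_contra h
      push_neg at h
      have hS1 : S = {v} := by
        apply Finset.eq_singleton_iff_unique_mem.mpr
        refine ⟨hvS, fun x hx => ?_⟩
        by_contra hxv
        have hsub : ({x, v} : Finset V) ⊆ S := by
          intro y hy
          simp only [Finset.mem_insert, Finset.mem_singleton] at hy
          rcases hy with rfl | rfl
          · exact hx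
          · exact hvS
        have hle := Finset.card_le_card hsub
        rw [Finset.card_insert_of_notMem (by simpa using hxv), Finset.card_singleton] at hle
        omega
      have htr : closedNbhd G w ∩ D = closedNbhd G v ∩ D := by
        ext z
        simp only [closedNbhd, Set.mem_inter_iff, Set.mem_insert_iff,
          SimpleGraph.mem_neighborSet]
        constructor
        · rintro ⟨hz1 | hz2, hzD⟩
          · exact absurd (hz1 ▸ hzD) hwD
          · have hzS : z ∈ S := by
              simp [hS, SimpleGraph.mem_neighborFinset, hz2, hzD]
            rw [hS1, Finset.mem_singleton] at hzS
            exact ⟨Or.inl hzS, hzD⟩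
        · rintro ⟨hz1 | hz2, hzD⟩
          · exact ⟨Or.inr (hz1 ▸ hadj.symm), hzD⟩
          · exact absurd hzD (hone z hz2)
      exact hD.2 w v (fun h => G.ne_of_adj hadj h.symm) htr
    have h2' : (2 : ℝ) ≤ (S.card : ℝ) := by exact_mod_cast h2
    rw [div_le_div_iff₀ (by linarith) (by norm_num)]
    nlinarith
  have hsum : ∑ w ∈ (G.neighborFinset v).filter (fun w => w ∉ D),
      (2 : ℝ) / (5 * ((G.neighborFinset w).filter (fun z => z ∈ D)).card) ≤ 3 / 5 := by
    calc _ ≤ ((G.neighborFinset v).filter (fun w => w ∉ D)).card • ((1:ℝ)/5) :=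
          Finset.sum_le_card_nsmul _ _ _ hterm
      _ ≤ 3 • ((1:ℝ)/5) := by
          apply nsmul_le_nsmul_left (by norm_num)
          calc ((G.neighborFinset v).filter (fun w => w ∉ D)).card
              ≤ (G.neighborFinset v).card := Finset.card_filter_le _ _
            _ = 3 := hreg v
      _ = 3/5 := by norm_num
  exact ⟨hsum, by linarith⟩
end

section
/- For the infinite hexagonal grid H, every identifying code D has density at least 2/5. -/
lemma hex_adj_iff_s17 {a b : ℤ × ℤ} : hexGrid.Adj a b ↔
    (a.2 = b.2 ∧ (a.1 = b.1 + 1 ∨ b.1 = a.1 + 1)) ∨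
    (a.1 = b.1 ∧ Even (a.1 + min a.2 b.2) ∧ (b.2 = a.2 + 1 ∨ a.2 = b.2 + 1)) := Iff.rfl

lemma hex_adj_coord {a b : ℤ × ℤ} (h : hexGrid.Adj a b) :
    (a.1 - b.1).natAbs + (a.2 - b.2).natAbs = 1 := by
  rcases h with ⟨h1, h2⟩ | ⟨h1, h2, h3⟩ <;> omega

lemma hex_reach_aux : ∀ n : ℕ, ∀ a : ℤ × ℤ, a.1.natAbs + a.2.natAbs = n →
    hexGrid.Reachable a (0, 0) := by
  intro n
  induction n using Nat.strong_induction_on with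
  | _ n ih =>
    rintro ⟨x, y⟩ h
    by_cases hx : x = 0
    · subst hx
      rcases lt_trichotomy y 0 with hy | hy | hy
      · -- y < 0 : go to (0, y+1)
        have hr : hexGrid.Reachable ((0 : ℤ), y + 1) (0, 0) := by
          exact ih (y + 1).natAbs (by omega) _ (by simp)
        refine SimpleGraph.Reachable.trans ?_ hr
        by_cases hp : Even y
        · refine SimpleGraph.Adj.reachable ?_
          refine Or.inr ⟨rfl, ?_, Or.inl rfl⟩
          have hmin : min y (y + 1) = y := by omega
          rw [hmin]; simpa using hp
        · -- odd: path via (1,y), (1,y+1)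
          have a1 : hexGrid.Adj (0, y) (1, y) := Or.inl ⟨rfl, Or.inr rfl⟩
          have a2 : hexGrid.Adj ((1 : ℤ), y) (1, y + 1) := by
            refine Or.inr ⟨rfl, ?_, Or.inl rfl⟩
            have hmin : min y (y + 1) = y := by omega
            rw [hmin, Int.even_iff]
            rw [Int.even_iff] at hp
            omega
          have a3 : hexGrid.Adj ((1 : ℤ), y + 1) (0, y + 1) := Or.inl ⟨rfl, Or.inl rfl⟩
          exact (a1.reachable.trans a2.reachable).trans a3.reachable
      · subst hy; rfl
      · -- y > 0 : go to (0, y-1)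
        have hr : hexGrid.Reachable ((0 : ℤ), y - 1) (0, 0) := by
          exact ih (y - 1).natAbs (by omega) _ (by simp)
        refine SimpleGraph.Reachable.trans ?_ hr
        by_cases hp : Even (y - 1)
        · refine SimpleGraph.Adj.reachable ?_
          refine Or.inr ⟨rfl, ?_, Or.inr (by ring)⟩
          have hmin : min y (y - 1) = y - 1 := by omega
          rw [hmin]; simpa using hp
        · have a1 : hexGrid.Adj (0, y) (1, y) := Or.inl ⟨rfl, Or.inr rfl⟩
          have a2 : hexGrid.Adj ((1 : ℤ), y) (1, y - 1) := by
            refine Or.inr ⟨rfl, ?_, Or.inr (by ring)⟩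
            have hmin : min y (y - 1) = y - 1 := by omega
            rw [hmin, Int.even_iff]
            rw [Int.even_iff] at hp
            omega
          have a3 : hexGrid.Adj ((1 : ℤ), y - 1) (0, y - 1) := Or.inl ⟨rfl, Or.inl rfl⟩
          exact (a1.reachable.trans a2.reachable).trans a3.reachable
    · -- move x toward 0
      rcases lt_trichotomy x 0 with hx' | hx' | hx'
      · have hr : hexGrid.Reachable (x + 1, y) (0, 0) := by
          exact ih ((x + 1).natAbs + y.natAbs) (by omega) _ rfl
        exact (SimpleGraph.Adj.reachable (Or.inl ⟨rfl, Or.inr rfl⟩)).trans hr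
      · omega
      · have hr : hexGrid.Reachable (x - 1, y) (0, 0) := by
          exact ih ((x - 1).natAbs + y.natAbs) (by omega) _ rfl
        exact (SimpleGraph.Adj.reachable (Or.inl ⟨rfl, Or.inl (by ring)⟩)).trans hr

lemma hex_connected : hexGrid.Connected := by
  rw [SimpleGraph.connected_iff_exists_forall_reachable]
  exact ⟨(0, 0), fun v => (hex_reach_aux _ v rfl).symm⟩

lemma hex_walk_coord {a b : ℤ × ℤ} (p : hexGrid.Walk a b) :
    (a.1 - b.1).natAbs + (a.2 - b.2).natAbs ≤ p.length := by
  induction p with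
  | nil => simp
  | cons h p ih =>
    have := hex_adj_coord h
    rw [SimpleGraph.Walk.length_cons]
    omega

lemma hex_dist_coord (a b : ℤ × ℤ) :
    (a.1 - b.1).natAbs + (a.2 - b.2).natAbs ≤ hexGrid.dist a b := by
  obtain ⟨p, hp⟩ := hex_connected.exists_walk_length_eq_dist a b
  exact hp ▸ hex_walk_coord p

/-- the ball of radius `h` around `v₀`. -/
def hexBall (v₀ : ℤ × ℤ) (h : ℕ) : Set (ℤ × ℤ) := {u | hexGrid.dist v₀ u ≤ h}

lemma hexBall_subset_box (v₀ : ℤ × ℤ) (h : ℕ) :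
    hexBall v₀ h ⊆ ↑((Finset.Icc (v₀.1 - h) (v₀.1 + h)) ×ˢ (Finset.Icc (v₀.2 - h) (v₀.2 + h))) := by
  intro u hu
  have := hex_dist_coord v₀ u
  have hd : hexGrid.dist v₀ u ≤ h := hu
  simp only [Finset.coe_product, Set.mem_prod, Finset.mem_coe, Finset.mem_Icc]
  omega

lemma hexBall_finite (v₀ : ℤ × ℤ) (h : ℕ) : (hexBall v₀ h).Finite :=
  Set.Finite.subset (Finset.finite_toSet _) (hexBall_subset_box v₀ h)

lemma hexBall_ncard_le (v₀ : ℤ × ℤ) (h : ℕ) :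
    (hexBall v₀ h).ncard ≤ (2 * h + 1) ^ 2 := by
  have h1 := Set.ncard_le_ncard (hexBall_subset_box v₀ h) (Finset.finite_toSet _)
  rw [Set.ncard_coe_finset] at h1
  refine h1.trans ?_
  rw [Finset.card_product]
  have : ∀ z : ℤ, (Finset.Icc (z - h) (z + h)).card = 2 * h + 1 := by
    intro z
    rw [Int.card_Icc]
    omega
  rw [this, this, sq]

lemma hexBall_mem (v₀ : ℤ × ℤ) (h : ℕ) : v₀ ∈ hexBall v₀ h := by
  simp [hexBall, SimpleGraph.dist_self]

lemma hexBall_ncard_pos (v₀ : ℤ × ℤ) (h : ℕ) : 1 ≤ (hexBall v₀ h).ncard :=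
  (Set.ncard_pos (hexBall_finite v₀ h)).mpr ⟨v₀, hexBall_mem v₀ h⟩

lemma hexBall_mono (v₀ : ℤ × ℤ) {h h' : ℕ} (hh : h ≤ h') : hexBall v₀ h ⊆ hexBall v₀ h' :=
  fun u hu => le_trans hu hh

lemma mem_closedNbhd_iff {V : Type*} {G : SimpleGraph V} {u v : V} :
    u ∈ closedNbhd G v ↔ u = v ∨ G.Adj v u := by
  simp [closedNbhd]

lemma mem_closedNbhd_symm {V : Type*} {G : SimpleGraph V} {u v : V}
    (h : u ∈ closedNbhd G v) : v ∈ closedNbhd G u := by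
  rw [mem_closedNbhd_iff] at h ⊢
  rcases h with h | h
  · exact Or.inl h.symm
  · exact Or.inr h.symm

/-- An explicit 4-element finset containing the closed neighborhood. -/
def nbhdFinset (v : ℤ × ℤ) : Finset (ℤ × ℤ) :=
  {v, (v.1 + 1, v.2), (v.1 - 1, v.2),
    if Even (v.1 + v.2) then (v.1, v.2 + 1) else (v.1, v.2 - 1)}

lemma nbhdFinset_card (v : ℤ × ℤ) : (nbhdFinset v).card ≤ 4 := by
  unfold nbhdFinset
  refine le_trans (Finset.card_insert_le _ _) ?_
  refine Nat.succ_le_succ ?_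
  refine le_trans (Finset.card_insert_le _ _) ?_
  refine Nat.succ_le_succ ?_
  refine le_trans (Finset.card_insert_le _ _) ?_
  exact Nat.succ_le_succ (Finset.card_singleton _).le

lemma closedNbhd_subset (v : ℤ × ℤ) : closedNbhd hexGrid v ⊆ ↑(nbhdFinset v) := by
  intro u hu
  rw [mem_closedNbhd_iff] at hu
  simp only [nbhdFinset, Finset.coe_insert, Set.mem_insert_iff, Finset.coe_singleton,
    Set.mem_singleton_iff]
  rcases hu with h | h
  · exact Or.inl h
  · rcases h with ⟨h1, h2⟩ | ⟨h1, h2, h3⟩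
    · rcases h2 with h2 | h2
      · right; right; left
        exact Prod.ext (by omega) h1.symm
      · right; left
        exact Prod.ext (by omega) h1.symm
    · right; right; right
      rw [Int.even_iff] at h2
      rcases h3 with h3 | h3
      · have hmin : min v.2 u.2 = v.2 := by omega
        rw [hmin] at h2
        rw [if_pos (Int.even_iff.mpr h2)]
        exact Prod.ext h1.symm (by omega)
      · have hmin : min v.2 u.2 = u.2 := by omega
        rw [hmin] at h2
        rw [if_neg (by rw [Int.even_iff]; omega)]
        exact Prod.ext h1.symm (by omega)

lemma closedNbhd_finite (v : ℤ × ℤ) : (closedNbhd hexGrid v).Finite :=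
  Set.Finite.subset (Finset.finite_toSet _) (closedNbhd_subset v)

section Trace

variable (D : Set (ℤ × ℤ))

/-- The trace of the closed neighborhood of `x` on the code `D`. -/
def trace (x : ℤ × ℤ) : Set (ℤ × ℤ) := closedNbhd hexGrid x ∩ D

lemma trace_finite (x : ℤ × ℤ) : (trace D x).Finite :=
  (closedNbhd_finite x).subset Set.inter_subset_left

variable {D} (hD : IsIDCode hexGrid D)
include hD

lemma trace_ncard_pos (x : ℤ × ℤ) : 1 ≤ (trace D x).ncard :=
  (Set.ncard_pos (trace_finite D x)).mpr (hD.1 x)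

lemma trace_singleton_unique {x y c : ℤ × ℤ} (hxy : x ≠ y)
    (hcx : c ∈ trace D x) (hcy : c ∈ trace D y)
    (h1 : (trace D x).ncard = 1) (h2 : (trace D y).ncard = 1) : False := by
  obtain ⟨a, ha⟩ := (Set.ncard_eq_one).mp h1
  obtain ⟨b, hb⟩ := (Set.ncard_eq_one).mp h2
  rw [ha] at hcx; rw [hb] at hcy
  apply hD.2 x y hxy
  show trace D x = trace D y
  rw [ha, hb, ← hcx, ← hcy]

/-- The key local bound: the total share of a codeword over any finset of
vertices in its closed neighborhood is at most `5/2`. -/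
lemma share_bound (c : ℤ × ℤ) (T : Finset (ℤ × ℤ))
    (hT : ∀ v ∈ T, v ∈ closedNbhd hexGrid c ∧ c ∈ trace D v) :
    ∑ v ∈ T, (1 : ℝ) / (trace D v).ncard ≤ 5 / 2 := by
  have hTsub : T ⊆ nbhdFinset c := fun v hv => closedNbhd_subset c (hT v hv).1
  have hTcard : T.card ≤ 4 := le_trans (Finset.card_le_card hTsub) (nbhdFinset_card c)
  set S1 := T.filter (fun v => (trace D v).ncard = 1) with hS1
  have hS1card : S1.card ≤ 1 := by
    rw [Finset.card_le_one]
    intro a ha b hb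
    by_contra hab
    rw [hS1, Finset.mem_filter] at ha hb
    exact trace_singleton_unique hD hab (hT a ha.1).2 (hT b hb.1).2 ha.2 hb.2
  have hsplit := Finset.sum_filter_add_sum_filter_not T
    (fun v => (trace D v).ncard = 1) (fun v => (1 : ℝ) / (trace D v).ncard)
  set S2 := T.filter (fun v => ¬(trace D v).ncard = 1) with hS2
  have hb1 : ∑ v ∈ S1, (1 : ℝ) / (trace D v).ncard ≤ (S1.card : ℝ) := by
    have h := Finset.sum_le_card_nsmul S1 (fun v => (1 : ℝ) / (trace D v).ncard) 1 ?_
    · simpa using h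
    · intro v hv
      rw [hS1, Finset.mem_filter] at hv
      simp [hv.2]
  have hb2 : ∑ v ∈ S2, (1 : ℝ) / (trace D v).ncard ≤ (S2.card : ℝ) * (1 / 2) := by
    have h := Finset.sum_le_card_nsmul S2 (fun v => (1 : ℝ) / (trace D v).ncard) (1 / 2) ?_
    · rw [nsmul_eq_mul] at h
      exact h
    · intro v hv
      rw [hS2, Finset.mem_filter] at hv
      have h2 : 2 ≤ (trace D v).ncard := by
        have := trace_ncard_pos hD v
        omega
      exact one_div_le_one_div_of_le (by norm_num) (by exact_mod_cast h2)
  have hcards : S1.card + S2.card = T.card := by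
    rw [hS1, hS2]
    exact Finset.card_filter_add_card_filter_not _
  rw [← hsplit]
  have c1 : (S1.card : ℝ) ≤ 1 := by exact_mod_cast hS1card
  have c2 : (S1.card : ℝ) + (S2.card : ℝ) ≤ 4 := by exact_mod_cast hcards ▸ hTcard
  linarith

end Trace

lemma hex_dist_adj_le_one {u v : ℤ × ℤ} (h : v ∈ closedNbhd hexGrid u) :
    hexGrid.dist u v ≤ 1 := by
  rw [mem_closedNbhd_iff] at h
  rcases h with h | h
  · subst h; simp [SimpleGraph.dist_self]
  · exact le_trans (SimpleGraph.dist_le h.toWalk) (by simp)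

/-- The main counting inequality: `|B_h| ≤ (5/2) |D ∩ B_{h+1}|`. -/
lemma main_count {D : Set (ℤ × ℤ)} (hD : IsIDCode hexGrid D) (v₀ : ℤ × ℤ) (h : ℕ) :
    ((hexBall v₀ h).ncard : ℝ) ≤ 5 / 2 * ((D ∩ hexBall v₀ (h + 1)).ncard : ℝ) := by
  have hBfin := hexBall_finite v₀ h
  have hAfin : (D ∩ hexBall v₀ (h + 1)).Finite :=
    (hexBall_finite v₀ (h + 1)).subset Set.inter_subset_right
  set F := hBfin.toFinset with hF
  set A := hAfin.toFinset with hA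
  -- each trace finset is contained in A
  have htv_sub : ∀ v ∈ F, (trace_finite D v).toFinset ⊆ A := by
    intro v hv c hc
    rw [Set.Finite.mem_toFinset] at hc ⊢
    refine ⟨hc.2, ?_⟩
    have h1 : hexGrid.dist v₀ v ≤ h := by
      have := (Set.Finite.mem_toFinset hBfin).mp hv
      exact this
    have h2 : hexGrid.dist v c ≤ 1 := hex_dist_adj_le_one hc.1
    calc hexGrid.dist v₀ c ≤ hexGrid.dist v₀ v + hexGrid.dist v c :=
          hex_connected.dist_triangle
      _ ≤ h + 1 := by omega
  have hone : ∀ v : ℤ × ℤ, ∑ _c ∈ (trace_finite D v).toFinset,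
      (1 : ℝ) / (trace D v).ncard = 1 := by
    intro v
    rw [Finset.sum_const, ← Set.ncard_eq_toFinset_card (trace D v) (trace_finite D v),
      nsmul_eq_mul]
    have hpos := trace_ncard_pos hD v
    field_simp
  classical
  have key : (F.card : ℝ) = ∑ v ∈ F, ∑ c ∈ A,
      (if c ∈ trace D v then (1 : ℝ) / (trace D v).ncard else 0) := by
    rw [Finset.card_eq_sum_ones, Nat.cast_sum]
    refine Finset.sum_congr rfl ?_
    intro v hv
    have hfilt : A.filter (fun c => c ∈ trace D v) = (trace_finite D v).toFinset := by
      ext c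
      simp only [Finset.mem_filter, Set.Finite.mem_toFinset]
      exact ⟨fun hc => hc.2, fun hc =>
        ⟨htv_sub v hv ((Set.Finite.mem_toFinset _).mpr hc), hc⟩⟩
    rw [Nat.cast_one]
    calc (1 : ℝ) = ∑ _c ∈ (trace_finite D v).toFinset,
          (1 : ℝ) / (trace D v).ncard := (hone v).symm
      _ = ∑ c ∈ A, (if c ∈ trace D v then (1 : ℝ) / (trace D v).ncard else 0) := by
          rw [← hfilt, Finset.sum_filter]
  rw [Set.ncard_eq_toFinset_card _ hBfin, ← hF, key, Finset.sum_comm]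
  have hinner : ∀ c ∈ A, ∑ v ∈ F,
      (if c ∈ trace D v then (1 : ℝ) / (trace D v).ncard else 0) ≤ 5 / 2 := by
    intro c hc
    have hcD : c ∈ D := ((Set.Finite.mem_toFinset hAfin).mp hc).1
    rw [← Finset.sum_filter]
    refine share_bound hD c _ ?_
    intro v hv
    rw [Finset.mem_filter] at hv
    exact ⟨mem_closedNbhd_symm hv.2.1, hv.2⟩
  calc ∑ c ∈ A, ∑ v ∈ F,
        (if c ∈ trace D v then (1 : ℝ) / (trace D v).ncard else 0)
      ≤ ∑ _c ∈ A, (5 / 2 : ℝ) := Finset.sum_le_sum hinner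
    _ = A.card * (5 / 2) := by rw [Finset.sum_const, nsmul_eq_mul]
    _ = 5 / 2 * ((D ∩ hexBall v₀ (h + 1)).ncard : ℝ) := by
        rw [Set.ncard_eq_toFinset_card _ hAfin]
        ring

lemma density_bound {D : Set (ℤ × ℤ)} (hD : IsIDCode hexGrid D) (v₀ : ℤ × ℤ) :
    (2 : ℝ) / 5 ≤ Filter.limsup (fun h : ℕ =>
        ((D ∩ hexBall v₀ h).ncard : ℝ) / ((hexBall v₀ h).ncard : ℝ)) Filter.atTop := by
  set a : ℕ → ℝ := fun h => ((D ∩ hexBall v₀ h).ncard : ℝ) with ha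
  set b : ℕ → ℝ := fun h => ((hexBall v₀ h).ncard : ℝ) with hb
  set f : ℕ → ℝ := fun h => a h / b h with hf
  have hb1 : ∀ h, (1 : ℝ) ≤ b h := fun h => by
    show (1 : ℝ) ≤ ((hexBall v₀ h).ncard : ℝ)
    exact_mod_cast hexBall_ncard_pos v₀ h
  have hbpos : ∀ h, (0 : ℝ) < b h := fun h => lt_of_lt_of_le one_pos (hb1 h)
  have hab : ∀ h, a h ≤ b h := fun h => by
    show ((D ∩ hexBall v₀ h).ncard : ℝ) ≤ ((hexBall v₀ h).ncard : ℝ)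
    exact_mod_cast Set.ncard_le_ncard Set.inter_subset_right (hexBall_finite v₀ h)
  have hf0 : ∀ h, 0 ≤ f h := fun h =>
    div_nonneg (by positivity) (le_of_lt (hbpos h))
  have hf1 : ∀ h, f h ≤ 1 := fun h => by
    rw [div_le_one (hbpos h)]; exact hab h
  have hbdd : Filter.IsBoundedUnder (· ≤ ·) Filter.atTop f :=
    Filter.isBoundedUnder_of ⟨1, hf1⟩
  by_contra hlt
  push_neg at hlt
  set L := Filter.limsup f Filter.atTop with hL
  have hL0 : 0 ≤ L :=
    Filter.le_limsup_of_frequently_le (Filter.Frequently.of_forall hf0) hbdd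
  set L' := (L + 2 / 5) / 2 with hL'
  have hL'pos : 0 < L' := by rw [hL']; linarith
  have hL'lt : L' < 2 / 5 := by rw [hL']; linarith
  have hev : ∀ᶠ n in Filter.atTop, f n < L' :=
    Filter.eventually_lt_of_limsup_lt (by rw [hL'] ; linarith) hbdd
  obtain ⟨N, hN⟩ := Filter.eventually_atTop.mp hev
  set r := (2 / 5) / L' with hr
  have hr1 : 1 < r := (one_lt_div hL'pos).mpr hL'lt
  have hrpos : 0 < r := lt_trans one_pos hr1
  -- growth step
  have hstep : ∀ n, N ≤ n → r * b n ≤ b (n + 1) := by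
    intro n hn
    have h1 : a (n + 1) < L' * b (n + 1) := by
      have := hN (n + 1) (by omega)
      rw [hf, div_lt_iff₀ (hbpos (n + 1))] at this
      exact this
    have h2 : b n ≤ 5 / 2 * a (n + 1) := main_count hD v₀ n
    have h3 : r * b n ≤ r * (5 / 2 * a (n + 1)) :=
      mul_le_mul_of_nonneg_left h2 (le_of_lt hrpos)
    have h4 : r * (5 / 2 * a (n + 1)) = a (n + 1) / L' := by
      rw [hr]; field_simp
    have h5 : a (n + 1) / L' < b (n + 1) := by
      rw [div_lt_iff₀ hL'pos]
      linarith [h1]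
    linarith
  have hgeo : ∀ k : ℕ, r ^ k ≤ b (N + k) := by
    intro k
    induction k with
    | zero => simpa using hb1 N
    | succ k ih =>
      calc r ^ (k + 1) = r * r ^ k := by ring
        _ ≤ r * b (N + k) := mul_le_mul_of_nonneg_left ih (le_of_lt hrpos)
        _ ≤ b (N + k + 1) := hstep (N + k) (by omega)
  have hpoly : ∀ k : ℕ, b (N + k) ≤ ((2 * (N + k) + 1 : ℕ) : ℝ) ^ 2 := by
    intro k
    have h5 := hexBall_ncard_le v₀ (N + k)
    show ((hexBall v₀ (N + k)).ncard : ℝ) ≤ _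
    exact_mod_cast h5
  -- contradiction via quadratic vs exponential growth
  set ε := r - 1 with hε
  have hεpos : 0 < ε := by rw [hε]; linarith
  set k := max 1 ⌈(2 * (N : ℝ) + 11) / ε ^ 2⌉₊ with hk
  have hk1 : (1 : ℝ) ≤ (k : ℝ) := by
    have : 1 ≤ k := le_max_left _ _
    exact_mod_cast this
  have hk2 : 2 * (N : ℝ) + 11 ≤ (k : ℝ) * ε ^ 2 := by
    have h1 : (2 * (N : ℝ) + 11) / ε ^ 2 ≤ (⌈(2 * (N : ℝ) + 11) / ε ^ 2⌉₊ : ℝ) :=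
      Nat.le_ceil _
    have h2 : (⌈(2 * (N : ℝ) + 11) / ε ^ 2⌉₊ : ℝ) ≤ (k : ℝ) := by
      exact Nat.cast_le.mpr (le_max_right _ _)
    rw [div_le_iff₀ (by positivity)] at h1
    have h3 : (⌈(2 * (N : ℝ) + 11) / ε ^ 2⌉₊ : ℝ) * ε ^ 2 ≤ (k : ℝ) * ε ^ 2 :=
      mul_le_mul_of_nonneg_right h2 (sq_nonneg ε)
    exact le_trans h1 h3
  -- combine
  have hA : ((k : ℝ) * ε) ^ 4 ≤ (r ^ k) ^ 4 := by
    refine pow_le_pow_left₀ (by positivity) ?_ 4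
    calc (k : ℝ) * ε ≤ 1 + k * ε := by linarith
      _ ≤ (1 + ε) ^ k := one_add_mul_le_pow (by linarith) k
      _ = r ^ k := by rw [hε]; ring_nf
  have hC : (((k : ℝ) ^ 2 * ε ^ 2)) ^ 2 ≤ (((2 * (N + 4 * k) + 1 : ℕ) : ℝ)) ^ 2 := by
    calc (((k : ℝ) ^ 2 * ε ^ 2)) ^ 2 = ((k : ℝ) * ε) ^ 4 := by ring
      _ ≤ (r ^ k) ^ 4 := hA
      _ = r ^ (4 * k) := by rw [← pow_mul]; ring_nf
      _ ≤ b (N + 4 * k) := hgeo (4 * k)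
      _ ≤ ((2 * (N + 4 * k) + 1 : ℕ) : ℝ) ^ 2 := hpoly (4 * k)
  have hmain : (k : ℝ) ^ 2 * ε ^ 2 ≤ 2 * N + 8 * k + 1 := by
    have := (pow_le_pow_iff_left₀ (by positivity) (by positivity) two_ne_zero).mp hC
    calc (k : ℝ) ^ 2 * ε ^ 2 ≤ ((2 * (N + 4 * k) + 1 : ℕ) : ℝ) := this
      _ = 2 * N + 8 * k + 1 := by push_cast; ring
  nlinarith [mul_le_mul_of_nonneg_left hk2 (by linarith : (0 : ℝ) ≤ (k : ℝ)), hk1, hεpos]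

/-- Main theorem: every identifying code for the infinite hexagonal grid has
density at least `2/5`. -/
theorem hex_id_code_density_two_fifths (D : Set (ℤ × ℤ))
    (hD : IsIDCode hexGrid D) (v₀ : ℤ × ℤ) :
    (2 : ℝ) / 5 ≤ Filter.limsup (fun h : ℕ =>
        ((D ∩ {u | hexGrid.dist v₀ u ≤ h}).ncard : ℝ) /
          ({u : ℤ × ℤ | hexGrid.dist v₀ u ≤ h}.ncard : ℝ)) Filter.atTop := by
  exact density_bound hD v₀
end
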